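/- Let c, d ∈ ℂ with d ≠ 0 and let γ > 0 with γ ≠ 1; assume (γ−1)/γ is not a non-positive integer. Define u₊(x) = x·exp(−(d/γ)x^γ)·M( (γ+1−c/d)/(2γ), (γ+1)/γ, (2d/γ)x^γ ) and u₋(x) = exp(−(d/γ)x^γ)·M( (γ−1−c/d)/(2γ), (γ−1)/γ, (2d/γ)x^γ ). Then as x → 0⁺: u₊(x) = x − (c/(γ(γ+1)))·x^{γ+1} + O(x^{2γ+1}), u₊'(x) = 1 − (c/γ)·x^γ + O(x^{2γ}), u₋(x) = 1 − (c/((γ−1)γ))·x^γ + O(x^{2γ}), and u₋'(x) = −(c/(γ−1))·x^{γ−1} + O(x^{2γ−1}). -/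

import Mathlib

open Real Filter Topology Asymptotics

noncomputable section

/-- Kummer's confluent hypergeometric function
`M(a,b,x) = ∑ₙ ((a)ₙ/(b)ₙ) xⁿ/n!`, where `(a)ₙ` is the Pochhammer symbol. -/
def kummerM (a b x : ℂ) : ℂ :=
  ∑' n : ℕ, ((ascPochhammer ℂ n).eval a / (ascPochhammer ℂ n).eval b) * x ^ n /
    (n.factorial : ℂ)

def kummerCoeff (a b : ℂ) (n : ℕ) : ℂ :=
  (ascPochhammer ℂ n).eval a / (ascPochhammer ℂ n).eval b / (n.factorial : ℂ)

lemma kummerCoeff_succ (a b z : ℂ) (n : ℕ) :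
    kummerCoeff a b (n + 1) * z ^ (n + 1)
      = kummerCoeff a b n * z ^ n * ((a + n) / (b + n) * (z / ((n : ℂ) + 1))) := by
  unfold kummerCoeff
  rw [ascPochhammer_succ_right, Polynomial.eval_mul,
    Polynomial.eval_mul, Nat.factorial_succ]
  simp only [Polynomial.eval_add, Polynomial.eval_X, Polynomial.eval_natCast]
  push_cast
  simp only [div_eq_mul_inv, mul_inv]
  ring

lemma kummer_summable_norm (a b z : ℂ) :
    Summable (fun n : ℕ => ‖kummerCoeff a b n * z ^ n‖) := by
  apply summable_of_ratio_norm_eventually_le (r := 1 / 2) (by norm_num)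
  have h1 : Tendsto (fun n : ℕ => (n : ℝ)) atTop atTop := tendsto_natCast_atTop_atTop
  filter_upwards [h1.eventually_ge_atTop (‖b‖ + 2 * (‖a‖ + 1) * (‖z‖ + 1))] with n hn
  have ha : ‖a + (n : ℂ)‖ ≤ (‖a‖ + 1) * ((n : ℝ) + 1) := by
    calc ‖a + (n : ℂ)‖ ≤ ‖a‖ + ‖(n : ℂ)‖ := norm_add_le _ _
    _ = ‖a‖ + n := by rw [Complex.norm_natCast]
    _ ≤ (‖a‖ + 1) * ((n : ℝ) + 1) := by nlinarith [norm_nonneg a, Nat.cast_nonneg (α := ℝ) n]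
  have hbn : 2 * (‖a‖ + 1) * (‖z‖ + 1) ≤ ‖b + (n : ℂ)‖ := by
    have h2 : ‖(n : ℂ)‖ - ‖-b‖ ≤ ‖(n : ℂ) - (-b)‖ := norm_sub_norm_le _ _
    simp only [Complex.norm_natCast, norm_neg, sub_neg_eq_add] at h2
    have h3 : ‖(n : ℂ) + b‖ = ‖b + (n : ℂ)‖ := by rw [add_comm]
    linarith
  have hbpos : (0 : ℝ) < ‖b + (n : ℂ)‖ := lt_of_lt_of_le (by positivity) hbn
  rw [Real.norm_of_nonneg (norm_nonneg _), Real.norm_of_nonneg (norm_nonneg _),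
    kummerCoeff_succ a b z n, norm_mul]
  rw [mul_comm (1/2 : ℝ)]
  apply mul_le_mul_of_nonneg_left _ (norm_nonneg _)
  have hn1 : ‖(n : ℂ) + 1‖ = (n : ℝ) + 1 := by
    have : ((n : ℂ) + 1) = (((n + 1 : ℕ) : ℝ) : ℂ) := by push_cast; ring
    rw [this, Complex.norm_real, Real.norm_of_nonneg (by positivity)]
    push_cast; ring
  rw [norm_mul, norm_div, norm_div, hn1]
  rw [div_mul_div_comm, div_le_iff₀ (by positivity)]
  nlinarith [norm_nonneg z, norm_nonneg a, Nat.cast_nonneg (α := ℝ) n,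
    mul_le_mul_of_nonneg_right hbn (by positivity : (0:ℝ) ≤ (n:ℝ) + 1),
    mul_le_mul_of_nonneg_right ha (norm_nonneg z)]

def kummerSeries (a b : ℂ) : FormalMultilinearSeries ℂ ℂ ℂ :=
  FormalMultilinearSeries.ofScalars ℂ (kummerCoeff a b)

lemma kummerSeries_radius (a b : ℂ) : (kummerSeries a b).radius = ⊤ := by
  apply FormalMultilinearSeries.radius_eq_top_of_summable_norm
  intro r
  apply (kummer_summable_norm a b ((r : ℝ) : ℂ)).congr
  intro n
  rw [norm_mul, norm_pow, Complex.norm_real, Real.norm_of_nonneg r.coe_nonneg]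
  rw [kummerSeries, FormalMultilinearSeries.ofScalars_norm]

lemma kummer_hasFPowerSeries (a b : ℂ) :
    HasFPowerSeriesOnBall (kummerM a b) (kummerSeries a b) 0 ⊤ := by
  refine ⟨(kummerSeries_radius a b).ge, ENNReal.zero_lt_top, fun {y} _ => ?_⟩
  rw [zero_add]
  have hs : Summable (fun n => kummerCoeff a b n * y ^ n) :=
    (kummer_summable_norm a b y).of_norm
  have h2 : kummerM a b y = ∑' n, kummerCoeff a b n * y ^ n := by
    refine tsum_congr fun n => ?_
    rw [kummerCoeff]; ring
  rw [h2]
  have := hs.hasSum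
  refine this.congr_fun fun n => ?_
  rw [kummerSeries, FormalMultilinearSeries.ofScalars_apply_eq, smul_eq_mul]

lemma kummer_analyticOnNhd (a b : ℂ) : AnalyticOnNhd ℂ (kummerM a b) Set.univ :=
  fun _ _ => (kummer_hasFPowerSeries a b).analyticAt_of_mem
    (by simp [EMetric.mem_ball, edist_lt_top])

lemma kummerM_zero (a b : ℂ) : kummerM a b 0 = 1 := by
  have h := (kummer_hasFPowerSeries a b).hasFPowerSeriesAt.coeff_zero (fun _ => (0 : ℂ))
  have h2 : (kummerSeries a b) 0 (fun _ => (0 : ℂ)) = kummerCoeff a b 0 := by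
    rw [kummerSeries, FormalMultilinearSeries.ofScalars_apply_eq, pow_zero, smul_eq_mul, mul_one]
  rw [h2] at h
  rw [← h, kummerCoeff, ascPochhammer_zero]
  simp

lemma kummer_hasDerivAt (a b : ℂ) : HasDerivAt (kummerM a b) (a / b) 0 := by
  have h := (kummer_hasFPowerSeries a b).hasFPowerSeriesAt.hasDerivAt
  have h2 : (kummerSeries a b) 1 (fun _ => (1 : ℂ)) = a / b := by
    rw [kummerSeries, FormalMultilinearSeries.ofScalars_apply_eq, one_pow, smul_eq_mul, mul_one,
      kummerCoeff, ascPochhammer_one]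
    simp
  rwa [h2] at h

def Gfun (a b w v : ℂ) (s : ℂ) : ℂ := Complex.exp (w * s) * kummerM a b (v * s)

lemma Gfun_def (a b w v s : ℂ) : Gfun a b w v s = Complex.exp (w * s) * kummerM a b (v * s) := rfl

lemma Gfun_analytic (a b w v : ℂ) : AnalyticOnNhd ℂ (Gfun a b w v) Set.univ := by
  intro z _
  exact ((analyticAt_cexp.comp (analyticAt_const.mul analyticAt_id)).mul
    ((kummer_analyticOnNhd a b (v * z) trivial).comp (analyticAt_const.mul analyticAt_id)))

lemma Gfun_zero (a b w v : ℂ) : Gfun a b w v 0 = 1 := by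
  simp [Gfun, kummerM_zero]

lemma Gfun_hasDerivAt_zero (a b w v : ℂ) :
    HasDerivAt (Gfun a b w v) (w + a / b * v) 0 := by
  have h0 : HasDerivAt (fun s : ℂ => w * s) w 0 := by
    simpa using (hasDerivAt_id (0 : ℂ)).const_mul w
  have h0' : HasDerivAt (fun s : ℂ => v * s) v 0 := by
    simpa using (hasDerivAt_id (0 : ℂ)).const_mul v
  have h1 : HasDerivAt (fun s : ℂ => Complex.exp (w * s)) w 0 := by
    simpa using h0.cexp
  have h2 : HasDerivAt (fun s : ℂ => kummerM a b (v * s)) (a / b * v) 0 := by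
    have hk : HasDerivAt (kummerM a b) (a / b) ((fun s : ℂ => v * s) 0) := by
      simpa using kummer_hasDerivAt a b
    have := hk.comp (0 : ℂ) h0'
    simpa [Function.comp_def] using this
  have := h1.mul h2
  simp only [mul_zero, Complex.exp_zero, kummerM_zero, one_mul, mul_one] at this
  exact this

lemma Gfun_taylor (a b w v : ℂ) {l : Filter ℝ} (φ : ℝ → ℂ) (hφ : Tendsto φ l (𝓝 0)) :
    (fun x => Gfun a b w v (φ x) - 1 - (w + a / b * v) * φ x) =O[l] fun x => ‖φ x‖ ^ 2 := by
  obtain ⟨p, hp⟩ := Gfun_analytic a b w v 0 trivial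
  have h2 := hp.isBigO_sub_partialSum_pow 2
  have hps : ∀ y : ℂ, p.partialSum 2 y = 1 + (w + a / b * v) * y := by
    intro y
    rw [FormalMultilinearSeries.partialSum, Finset.sum_range_succ, Finset.sum_range_one,
      p.apply_eq_pow_smul_coeff, p.apply_eq_pow_smul_coeff]
    have hc0 : p.coeff 0 = 1 := by
      have := hp.coeff_zero (fun _ => (1 : ℂ))
      rw [Gfun_zero] at this
      exact this
    have hc1 : p.coeff 1 = w + a / b * v := by
      have h3 := hp.deriv
      rw [(Gfun_hasDerivAt_zero a b w v).deriv] at h3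
      exact h3.symm
    rw [hc0, hc1]
    simp [smul_eq_mul, mul_comm]
  have h4 := h2.comp_tendsto hφ
  refine h4.congr' ?_ ?_
  · filter_upwards with x
    simp [Function.comp, hps, zero_add, sub_sub]
  · filter_upwards with x
    rfl

lemma Gfun_deriv_taylor (a b w v : ℂ) {l : Filter ℝ} (φ : ℝ → ℂ) (hφ : Tendsto φ l (𝓝 0)) :
    (fun x => deriv (Gfun a b w v) (φ x) - (w + a / b * v)) =O[l] fun x => φ x := by
  have hd : AnalyticAt ℂ (deriv (Gfun a b w v)) 0 := (Gfun_analytic a b w v).deriv 0 trivial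
  have h1 := hd.differentiableAt.isBigO_sub
  have h2 := h1.comp_tendsto hφ
  refine h2.congr' ?_ ?_
  · filter_upwards with x
    simp [Function.comp, (Gfun_hasDerivAt_zero a b w v).deriv]
  · filter_upwards with x
    simp [Function.comp]

theorem stmt13 (c d : ℂ) (hd : d ≠ 0) (γ : ℝ) (hγ : 0 < γ) (hγ1 : γ ≠ 1)
    (hb : ∀ n : ℕ, (γ - 1) / γ ≠ -(n : ℝ))
    (uPlus uMinus : ℝ → ℂ)
    (huPlus : ∀ x : ℝ, uPlus x =
      (x : ℂ) * Complex.exp (-(d / (γ : ℂ)) * ((x ^ γ : ℝ) : ℂ)) *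
        kummerM (((γ : ℂ) + 1 - c / d) / (2 * (γ : ℂ))) (((γ : ℂ) + 1) / (γ : ℂ))
          ((2 * d / (γ : ℂ)) * ((x ^ γ : ℝ) : ℂ)))
    (huMinus : ∀ x : ℝ, uMinus x =
      Complex.exp (-(d / (γ : ℂ)) * ((x ^ γ : ℝ) : ℂ)) *
        kummerM (((γ : ℂ) - 1 - c / d) / (2 * (γ : ℂ))) (((γ : ℂ) - 1) / (γ : ℂ))
          ((2 * d / (γ : ℂ)) * ((x ^ γ : ℝ) : ℂ))) :
    ((fun x : ℝ => uPlus x -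
        ((x : ℂ) - c / ((γ : ℂ) * ((γ : ℂ) + 1)) * ((x ^ (γ + 1) : ℝ) : ℂ)))
      =O[𝓝[>] (0:ℝ)] fun x : ℝ => x ^ (2 * γ + 1)) ∧
    ((fun x : ℝ => deriv uPlus x - (1 - c / (γ : ℂ) * ((x ^ γ : ℝ) : ℂ)))
      =O[𝓝[>] (0:ℝ)] fun x : ℝ => x ^ (2 * γ)) ∧
    ((fun x : ℝ => uMinus x - (1 - c / (((γ : ℂ) - 1) * (γ : ℂ)) * ((x ^ γ : ℝ) : ℂ)))
      =O[𝓝[>] (0:ℝ)] fun x : ℝ => x ^ (2 * γ)) ∧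
    ((fun x : ℝ => deriv uMinus x - (-(c / ((γ : ℂ) - 1)) * ((x ^ (γ - 1) : ℝ) : ℂ)))
      =O[𝓝[>] (0:ℝ)] fun x : ℝ => x ^ (2 * γ - 1)) := by
  have hγ0 : (γ : ℂ) ≠ 0 := Complex.ofReal_ne_zero.mpr hγ.ne'
  have hγne1 : (γ : ℂ) ≠ 1 := by
    simpa using Complex.ofReal_injective.ne hγ1
  have hγm1 : (γ : ℂ) - 1 ≠ 0 := sub_ne_zero.mpr hγne1
  have hγp1 : (γ : ℂ) + 1 ≠ 0 := by
    have h : ((γ + 1 : ℝ) : ℂ) ≠ 0 := Complex.ofReal_ne_zero.mpr (by positivity)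
    simpa using h
  -- abbreviations (as plain terms)
  set w : ℂ := -(d / (γ : ℂ)) with hw
  set v : ℂ := 2 * d / (γ : ℂ) with hv
  set aP : ℂ := ((γ : ℂ) + 1 - c / d) / (2 * (γ : ℂ)) with haP
  set bP : ℂ := ((γ : ℂ) + 1) / (γ : ℂ) with hbP
  set aM : ℂ := ((γ : ℂ) - 1 - c / d) / (2 * (γ : ℂ)) with haM
  set bM : ℂ := ((γ : ℂ) - 1) / (γ : ℂ) with hbM
  set gP : ℂ := w + aP / bP * v with hgPdef
  set gM : ℂ := w + aM / bM * v with hgMdef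
  have hgP : gP = -(c / ((γ : ℂ) * ((γ : ℂ) + 1))) := by
    rw [hgPdef, hw, hv, haP, hbP, div_div_div_comm, div_mul_div_comm]
    field_simp
    ring
  have hgM : gM = -(c / (((γ : ℂ) - 1) * (γ : ℂ))) := by
    rw [hgMdef, hw, hv, haM, hbM, div_div_div_comm, div_mul_div_comm]
    field_simp
    ring
  set l : Filter ℝ := 𝓝[>] (0 : ℝ) with hl
  set φ : ℝ → ℂ := fun x : ℝ => ((x ^ γ : ℝ) : ℂ) with hφdef
  have hφ : Tendsto φ l (𝓝 0) := by
    have hc1 : ContinuousAt (fun x : ℝ => x ^ γ) 0 :=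
      Real.continuousAt_rpow_const 0 γ (Or.inr hγ.le)
    have h2 : Tendsto (fun x : ℝ => x ^ γ) (𝓝 0) (𝓝 0) := by
      simpa [Real.zero_rpow hγ.ne'] using hc1.tendsto
    have h2' : Tendsto (fun x : ℝ => x ^ γ) l (𝓝 0) := h2.mono_left nhdsWithin_le_nhds
    have h3 := (Complex.continuous_ofReal.tendsto 0).comp h2'
    simpa [Function.comp_def] using h3
  have hxev : ∀ᶠ x : ℝ in l, 0 < x := eventually_mem_nhdsWithin
  -- basic isBigO facts
  have hφO : φ =O[l] fun x : ℝ => x ^ γ :=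
    IsBigO.of_bound 1 (by filter_upwards with x; simp [hφdef])
  have hPow : ∀ γ' : ℝ, (fun x : ℝ => ((x ^ γ' : ℝ) : ℂ)) =O[l] fun x : ℝ => x ^ γ' :=
    fun γ' => IsBigO.of_bound 1 (by filter_upwards with x; simp)
  have hIdO : (fun x : ℝ => (x : ℂ)) =O[l] fun x : ℝ => x :=
    IsBigO.of_bound 1 (by filter_upwards with x; simp)
  have hnormsq : ∀ᶠ x : ℝ in l, ‖φ x‖ ^ 2 = x ^ (2 * γ) := by
    filter_upwards [hxev] with x hx
    rw [hφdef]
    simp only [Complex.norm_real, Real.norm_of_nonneg (Real.rpow_nonneg hx.le γ)]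
    rw [← Real.rpow_natCast (x ^ γ) 2, ← Real.rpow_mul hx.le]
    norm_num [mul_comm]
  -- Taylor bounds composed with φ
  have hAP : (fun x => Gfun aP bP w v (φ x) - 1 - gP * φ x) =O[l] fun x : ℝ => x ^ (2 * γ) :=
    (Gfun_taylor aP bP w v φ hφ).congr' EventuallyEq.rfl hnormsq
  have hAM : (fun x => Gfun aM bM w v (φ x) - 1 - gM * φ x) =O[l] fun x : ℝ => x ^ (2 * γ) :=
    (Gfun_taylor aM bM w v φ hφ).congr' EventuallyEq.rfl hnormsq
  have hBP : (fun x => deriv (Gfun aP bP w v) (φ x) - gP) =O[l] fun x : ℝ => x ^ γ :=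
    (Gfun_deriv_taylor aP bP w v φ hφ).trans hφO
  have hBM : (fun x => deriv (Gfun aM bM w v) (φ x) - gM) =O[l] fun x : ℝ => x ^ γ :=
    (Gfun_deriv_taylor aM bM w v φ hφ).trans hφO
  -- function identifications
  have huM : uMinus = fun y : ℝ => Gfun aM bM w v (φ y) := by
    funext y
    rw [huMinus y, Gfun_def, hφdef, hw, hv, haM, hbM]
  have huP : uPlus = fun y : ℝ => (y : ℂ) * Gfun aP bP w v (φ y) := by
    funext y
    rw [huPlus y, Gfun_def, hφdef, hw, hv, haP, hbP, mul_assoc]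
  -- derivatives for x > 0
  have hchain : ∀ (a b : ℂ) (x : ℝ), 0 < x →
      HasDerivAt (fun y : ℝ => Gfun a b w v (φ y))
        (deriv (Gfun a b w v) (φ x) * ((γ * x ^ (γ - 1) : ℝ) : ℂ)) x := by
    intro a b x hx
    have hdφ : HasDerivAt (fun y : ℝ => ((y ^ γ : ℝ) : ℂ)) ((γ * x ^ (γ - 1) : ℝ) : ℂ) x :=
      (Real.hasDerivAt_rpow_const (Or.inl hx.ne')).ofReal_comp
    have hGd : HasDerivAt (Gfun a b w v) (deriv (Gfun a b w v) (φ x)) (φ x) :=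
      ((Gfun_analytic a b w v) (φ x) trivial).differentiableAt.hasDerivAt
    have := hGd.comp x hdφ
    simpa [Function.comp_def, hφdef] using this
  have hderivM : ∀ x : ℝ, 0 < x →
      deriv uMinus x = deriv (Gfun aM bM w v) (φ x) * ((γ * x ^ (γ - 1) : ℝ) : ℂ) := by
    intro x hx
    rw [huM]
    exact (hchain aM bM x hx).deriv
  have hderivP : ∀ x : ℝ, 0 < x →
      deriv uPlus x = Gfun aP bP w v (φ x) +
        (x : ℂ) * (deriv (Gfun aP bP w v) (φ x) * ((γ * x ^ (γ - 1) : ℝ) : ℂ)) := by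
    intro x hx
    rw [huP]
    have hid : HasDerivAt (fun y : ℝ => (y : ℂ)) 1 x := by
      simpa using (hasDerivAt_id x).ofReal_comp
    have := hid.mul (hchain aP bP x hx)
    rw [show (fun y : ℝ => (y : ℂ) * Gfun aP bP w v (φ y)) =
      ((fun y : ℝ => (y : ℂ)) * fun y => Gfun aP bP w v (φ y)) from rfl, this.deriv]
    ring
  -- rpow arithmetic facts
  have hx_gsum : ∀ x : ℝ, 0 < x → x ^ (γ - 1) * x ^ γ = x ^ (2 * γ - 1) := by
    intro x hx
    rw [← Real.rpow_add hx]; ring_nf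
  have hx_gg : ∀ x : ℝ, 0 < x → x ^ γ * x ^ γ = x ^ (2 * γ) := by
    intro x hx
    rw [← Real.rpow_add hx]; ring_nf
  have hx_split : ∀ x : ℝ, 0 < x → ((x ^ (γ + 1) : ℝ) : ℂ) = (x : ℂ) * φ x := by
    intro x hx
    rw [hφdef, ← Complex.ofReal_mul, Real.rpow_add_one hx.ne' γ]
    rw [mul_comm]
  have hx_merge : ∀ x : ℝ, 0 < x → (x : ℂ) * ((x ^ (γ - 1) : ℝ) : ℂ) = φ x := by
    intro x hx
    rw [hφdef, ← Complex.ofReal_mul]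
    norm_cast
    rw [mul_comm, ← Real.rpow_add_one hx.ne' (γ - 1)]
    norm_num
  refine ⟨?_, ?_, ?_, ?_⟩
  · -- uPlus
    have hCP : c / ((γ : ℂ) * ((γ : ℂ) + 1)) = -gP := by rw [hgP]; ring
    have big := hIdO.mul hAP
    refine big.congr' ?_ ?_
    · filter_upwards [hxev] with x hx
      rw [huP, hCP, hx_split x hx]
      ring
    · filter_upwards [hxev] with x hx
      rw [Real.rpow_add_one hx.ne' (2 * γ)]
      ring
  · -- deriv uPlus
    have hzP : gP + (γ : ℂ) * gP + c / (γ : ℂ) = 0 := by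
      rw [hgP]; field_simp; ring
    have big2 := ((hφO.const_mul_left ((γ : ℂ))).mul hBP).congr' EventuallyEq.rfl
      (by filter_upwards [hxev] with x hx; exact hx_gg x hx)
    have big := hAP.add big2
    refine big.congr' ?_ EventuallyEq.rfl
    · filter_upwards [hxev] with x hx
      rw [hderivP x hx]
      have h1 : (x : ℂ) * (deriv (Gfun aP bP w v) (φ x) * ((γ * x ^ (γ - 1) : ℝ) : ℂ))
          = (γ : ℂ) * φ x * deriv (Gfun aP bP w v) (φ x) := by
        rw [Complex.ofReal_mul, ← hx_merge x hx]
        ring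
      rw [h1]
      have h2 : c / (γ : ℂ) = -(gP + (γ : ℂ) * gP) := by
        have := hzP; linear_combination this
      rw [h2]
      ring
  · -- uMinus
    have hCM : c / (((γ : ℂ) - 1) * (γ : ℂ)) = -gM := by rw [hgM]; ring
    refine hAM.congr' ?_ EventuallyEq.rfl
    · filter_upwards with x
      rw [huM, hCM]
      ring
  · -- deriv uMinus
    have hc4 : -(c / ((γ : ℂ) - 1)) = (γ : ℂ) * gM := by
      rw [hgM]; field_simp
    have big := ((hPow (γ - 1)).const_mul_left ((γ : ℂ))).mul hBM
    refine big.congr' ?_ ?_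
    · filter_upwards [hxev] with x hx
      rw [hderivM x hx, hc4, Complex.ofReal_mul]
      ring
    · filter_upwards [hxev] with x hx
      exact hx_gsum x hx
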